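/- arXiv:2511.04054 — 4 statements merged into one kernel-verified Lean document; each statement's English description precedes it below -/
import Mathlib

section
/- Let A be a compact subset of ℝⁿ, and for i = 1,…,N let J_i : ℝⁿ → ℝ and σ_i : ℝⁿ → ℝ be continuous functions with J_i(y) ≥ 0 and σ_i(y) ≥ 0 for all y, and σ_i(y) > 0 whenever J_i(y) > 0. If there is no point p ∈ A with J_1(p) = J_2(p) = ⋯ = J_N(p) = 0, then there is no continuous curve x : [0,∞) → ℝⁿ with x(t) ∈ A for all t ≥ 0 such that for each i the function t ↦ J_i(x(t)) is differentiable on [0,∞) with derivative at most −σ_i(x(t)) at every t ≥ 0. -/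
open scoped RealInnerProductSpace

/-- If `f` has derivative `D t ≤ -c` within `Ici 0` at each `t ≥ 0`, then
`f t + c * t ≤ f 0` for all `t ≥ 0`. -/
lemma decay_aux {f D : ℝ → ℝ} {c : ℝ}
    (hf : ∀ t, 0 ≤ t → HasDerivWithinAt f (D t) (Set.Ici 0) t)
    (hD : ∀ t, 0 ≤ t → D t ≤ -c) : ∀ t, 0 ≤ t → f t + c * t ≤ f 0 := by
  have hcont : ContinuousOn f (Set.Ici 0) := fun t ht =>
    (hf t ht).continuousWithinAt
  have hint : interior (Set.Ici (0:ℝ)) = Set.Ioi 0 := interior_Ici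
  have hanti : AntitoneOn (fun t => f t + c * t) (Set.Ici 0) := by
    apply antitoneOn_of_hasDerivWithinAt_nonpos (convex_Ici 0)
      (f' := fun t => D t + c)
    · exact hcont.add (continuous_const.mul continuous_id).continuousOn
    · intro t ht
      rw [hint] at ht ⊢
      have h2 : HasDerivWithinAt (fun y : ℝ => c * y) c (Set.Ioi 0) t := by
        simpa using ((hasDerivAt_id t).const_mul c).hasDerivWithinAt
      exact ((hf t (le_of_lt ht)).mono (Set.Ioi_subset_Ici le_rfl)).add h2
    · intro t ht
      rw [hint] at ht
      have := hD t (le_of_lt ht)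
      linarith
  intro t ht
  have := hanti (Set.self_mem_Ici) ht ht
  simpa using this

/-- Trajectory-level content of Proposition 1: if a compact set `A` contains no common
zero of the nonnegative value functions `J i`, then no trajectory can stay in `A`
while decreasing every `J i` at rate at least `σ i` (with `σ i > 0` wherever `J i > 0`). -/
theorem prop1_trajectory {n N : ℕ}
    (A : Set (EuclideanSpace ℝ (Fin n))) (hA : IsCompact A)
    (J σ : Fin N → EuclideanSpace ℝ (Fin n) → ℝ)
    (hJcont : ∀ i, Continuous (J i)) (hσcont : ∀ i, Continuous (σ i))
    (hJnonneg : ∀ i y, 0 ≤ J i y) (hσnonneg : ∀ i y, 0 ≤ σ i y)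
    (hσpos : ∀ i y, 0 < J i y → 0 < σ i y)
    (hnogoal : ¬ ∃ p ∈ A, ∀ i, J i p = 0) :
    ¬ ∃ (x : ℝ → EuclideanSpace ℝ (Fin n)) (D : Fin N → ℝ → ℝ),
      ContinuousOn x (Set.Ici 0) ∧
      (∀ t, 0 ≤ t → x t ∈ A) ∧
      (∀ i t, 0 ≤ t →
        HasDerivWithinAt (fun s => J i (x s)) (D i t) (Set.Ici 0) t) ∧
      (∀ i t, 0 ≤ t → D i t ≤ -σ i (x t)) := by
  rintro ⟨x, D, hxcont, hxA, hderiv, hDle⟩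
  have hx0 : x 0 ∈ A := hxA 0 le_rfl
  -- N = 0 is impossible
  rcases Nat.eq_zero_or_pos N with hN | hN
  · exact hnogoal ⟨x 0, hx0, fun i => absurd i.2 (by omega)⟩
  -- sum of J's is positive on A
  set S : EuclideanSpace ℝ (Fin n) → ℝ := fun p => ∑ i, J i p with hS
  have hScont : Continuous S := continuous_finset_sum _ fun i _ => hJcont i
  have hSpos : ∀ p ∈ A, 0 < S p := by
    intro p hp
    have hex : ∃ i ∈ Finset.univ, 0 < J i p := by
      by_contra h
      push_neg at h
      exact hnogoal ⟨p, hp, fun i => le_antisymm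
        (h i (Finset.mem_univ i)) (hJnonneg i p)⟩
    obtain ⟨i, -, hi⟩ := hex
    exact Finset.sum_pos' (fun j _ => hJnonneg j p) ⟨i, Finset.mem_univ i, hi⟩
  -- min of S on A
  obtain ⟨p₀, hp₀A, hp₀min⟩ := hA.exists_isMinOn ⟨x 0, hx0⟩ hScont.continuousOn
  set ε : ℝ := S p₀ with hεdef
  have hεpos : 0 < ε := hSpos p₀ hp₀A
  have hεN : 0 < ε / N := div_pos hεpos (by exact_mod_cast hN)
  -- for each i, a positive lower bound for σ i on {p ∈ A | ε/N ≤ J i p}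
  have hδ : ∀ i : Fin N, ∃ δ > 0, ∀ p ∈ A, ε / N ≤ J i p → δ ≤ σ i p := by
    intro i
    set K : Set (EuclideanSpace ℝ (Fin n)) := A ∩ {p | ε / N ≤ J i p} with hK
    have hKc : IsCompact K :=
      hA.inter_right (isClosed_le continuous_const (hJcont i))
    rcases K.eq_empty_or_nonempty with h | h
    · refine ⟨1, one_pos, fun p hp hJp => absurd (show p ∈ K from ⟨hp, hJp⟩) ?_⟩
      simp [h]
    · obtain ⟨q, hqK, hqmin⟩ := hKc.exists_isMinOn h (hσcont i).continuousOn
      refine ⟨σ i q, hσpos i q (lt_of_lt_of_le hεN hqK.2), fun p hp hJp =>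
        hqmin (Set.mem_inter hp hJp)⟩
  choose δ hδpos hδle using hδ
  -- each J i ∘ x is antitone on Ici 0
  have hanti : ∀ i : Fin N, ∀ t, 0 ≤ t → J i (x t) ≤ J i (x 0) := by
    intro i t ht
    have h0 : ∀ s, 0 ≤ s → D i s ≤ -(0:ℝ) := fun s hs => by
      have h1 := hDle i s hs
      have h2 := hσnonneg i (x s)
      linarith
    have := decay_aux (hderiv i) h0 t ht
    linarith
  -- case: some i has J i (x t) ≥ ε/N for all t ≥ 0
  by_cases hcase : ∃ i : Fin N, ∀ t, 0 ≤ t → ε / N ≤ J i (x t)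
  · obtain ⟨i, hi⟩ := hcase
    -- then D i t ≤ -δ i always, so J i (x t) → -∞
    have hkey : ∀ t, 0 ≤ t → J i (x t) + δ i * t ≤ J i (x 0) := by
      apply decay_aux (hderiv i)
      intro t ht
      exact le_trans (hDle i t ht) (neg_le_neg (hδle i _ (hxA t ht) (hi t ht)))
    set T : ℝ := (J i (x 0) + 1) / δ i with hT
    have hTpos : 0 ≤ T := div_nonneg (by linarith [hJnonneg i (x 0)]) (hδpos i).le
    have := hkey T hTpos
    have hmul : δ i * T = J i (x 0) + 1 := by
      rw [hT, mul_div_cancel₀ _ (hδpos i).ne']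
    have := hJnonneg i (x T)
    linarith
  · -- otherwise, every i eventually drops below ε/N; take max time
    push_neg at hcase
    choose τ hτ0 hτ using hcase
    set T : ℝ := (Finset.univ.sup' (Finset.univ_nonempty_iff.2
      ⟨⟨0, hN⟩⟩) τ) with hT
    have hT0 : 0 ≤ T := le_trans (hτ0 ⟨0, hN⟩)
      (Finset.le_sup' τ (Finset.mem_univ _))
    have hsmall : ∀ i : Fin N, J i (x T) < ε / N := by
      intro i
      -- J i (x T) ≤ J i (x (τ i)) < ε/N by antitone from τ i
      have hτT : τ i ≤ T := Finset.le_sup' τ (Finset.mem_univ i)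
      -- antitone on [τ i, ∞): use decay_aux with shifted function? use general antitone
      have hmono : AntitoneOn (fun t => J i (x t)) (Set.Ici 0) := by
        apply antitoneOn_of_hasDerivWithinAt_nonpos (convex_Ici 0)
          (f' := fun t => D i t)
        · exact fun t ht => (hderiv i t ht).continuousWithinAt
        · intro t ht
          rw [interior_Ici] at ht ⊢
          exact (hderiv i t ht.le).mono (Set.Ioi_subset_Ici le_rfl)
        · intro t ht
          rw [interior_Ici] at ht
          exact le_trans (hDle i t ht.le) (by simpa using hσnonneg i (x t))
      exact lt_of_le_of_lt (hmono (hτ0 i) (Set.mem_Ici.2 hT0) hτT) (hτ i)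
    have hsum : S (x T) < ε := by
      have : S (x T) < ∑ _i : Fin N, ε / N :=
        Finset.sum_lt_sum_of_nonempty (Finset.univ_nonempty_iff.2 ⟨⟨0, hN⟩⟩)
          fun i _ => hsmall i
      simpa [Finset.sum_const, Finset.card_univ, hεN.ne',
        mul_div_cancel₀, (show (N:ℝ) ≠ 0 by exact_mod_cast hN.ne')] using this
    exact absurd (hp₀min (hxA T hT0)) (not_le.2 hsum)
end

section
/- Let A be a compact subset of ℝⁿ, and for i = 1,…,N let J_i : ℝⁿ → ℝ and σ_i : ℝⁿ → ℝ be continuous functions with J_i(y) ≥ 0 and σ_i(y) ≥ 0 for all y, and σ_i(y) > 0 whenever J_i(y) > 0. Fix an index i₀ ∈ {1,…,N} and a real c ≥ 0, and let S = { y ∈ A : J_{i₀}(y) ≤ c } be the corresponding sublevel set. Suppose x : [0,∞) → ℝⁿ is continuous with x(t) ∈ A for all t ≥ 0, x(0) ∈ S, and for each i the function t ↦ J_i(x(t)) is differentiable on [0,∞) with derivative at most −σ_i(x(t)) at every t ≥ 0. Then x(t) ∈ S for all t ≥ 0, and there exist a point p ∈ S and a sequence of times t_k → ∞ with x(t_k)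 → p and J_i(p) = 0 for every i = 1,…,N. In particular, if S contains no point where all of J_1,…,J_N vanish, then no such trajectory starting in S exists. -/
open Filter Set Topology

/-! Each `J i ∘ x` is nonincreasing, so the trajectory stays in `S`, and `J i (x t) ≥ J i p` for
every cluster point `p` of `x` at infinity (one exists since `A` is compact). If `J i p > 0`, the
trajectory therefore stays in the compact set `A ∩ {J i ≥ J i p}`, where `σ i` is bounded below by
some `ε > 0`; then `J i (x t) ≤ J i (x 0) - ε t` eventually becomes negative. -/

section Monotonicity

variable {f f' : ℝ → ℝ} {a : ℝ}

lemma antitoneOn_Ici_of_hasDerivWithinAt_nonpos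
    (hf : ∀ t, a ≤ t → HasDerivWithinAt f (f' t) (Ici a) t)
    (hf' : ∀ t, a ≤ t → f' t ≤ 0) : AntitoneOn f (Ici a) := by
  refine antitoneOn_of_hasDerivWithinAt_nonpos (f' := f') (convex_Ici a)
    (fun t ht => (hf t ht).continuousWithinAt) (fun t ht => ?_) (fun t ht => ?_)
  · rw [interior_Ici] at ht ⊢
    exact (hf t (le_of_lt ht)).mono Ioi_subset_Ici_self
  · rw [interior_Ici] at ht
    exact hf' t (le_of_lt ht)

lemma le_sub_mul_of_hasDerivWithinAt_le_neg {ε : ℝ}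
    (hf : ∀ t, a ≤ t → HasDerivWithinAt f (f' t) (Ici a) t)
    (hf' : ∀ t, a ≤ t → f' t ≤ -ε) {t : ℝ} (ht : a ≤ t) : f t ≤ f a - ε * (t - a) := by
  have hanti : AntitoneOn (fun s => f s + ε * s) (Ici a) := by
    refine antitoneOn_Ici_of_hasDerivWithinAt_nonpos (f' := fun s => f' s + ε)
      (fun s hs => (hf s hs).add ((hasDerivWithinAt_id s _).const_mul ε |>.congr_deriv ?_))
      (fun s hs => by linarith [hf' s hs])
    simp
  linarith [hanti self_mem_Ici ht ht]

lemma tendsto_atBot_of_hasDerivWithinAt_le_neg {ε : ℝ} (hε : 0 < ε)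
    (hf : ∀ t, a ≤ t → HasDerivWithinAt f (f' t) (Ici a) t)
    (hf' : ∀ t, a ≤ t → f' t ≤ -ε) : Tendsto f atTop atBot := by
  have hlin : Tendsto (fun t => f a - ε * (t - a)) atTop atBot :=
    tendsto_atBot_add_const_left _ _ <| tendsto_neg_atTop_atBot.comp <|
      (tendsto_atTop_add_const_right _ _ tendsto_id).const_mul_atTop hε
  refine tendsto_atBot_mono' _ ?_ hlin
  filter_upwards [eventually_ge_atTop a] with t ht
  exact le_sub_mul_of_hasDerivWithinAt_le_neg hf hf' ht

lemma AntitoneOn.le_of_tendsto_comp {ι : Type*} {l : Filter ι} [l.NeBot]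
    (hf : AntitoneOn f (Ici a)) {u : ι → ℝ} (hu : Tendsto u l atTop) {L : ℝ}
    (hfu : Tendsto (f ∘ u) l (𝓝 L)) {t : ℝ} (ht : a ≤ t) : L ≤ f t := by
  refine le_of_tendsto hfu ?_
  filter_upwards [hu.eventually_ge_atTop t] with k hk
  exact hf ht (ht.trans hk) hk

end Monotonicity

theorem eq_zero_of_tendsto_of_hasDerivWithinAt_le_neg {X ι : Type*} [TopologicalSpace X]
    {l : Filter ι} [l.NeBot] {A : Set X} (hA : IsCompact A) {V σ : X → ℝ}
    (hV : Continuous V) (hσ : Continuous σ) (hVnonneg : ∀ y, 0 ≤ V y)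
    (hσnonneg : ∀ y, 0 ≤ σ y) (hσpos : ∀ y, 0 < V y → 0 < σ y)
    {x : ℝ → X} (hxA : ∀ t, 0 ≤ t → x t ∈ A) {D : ℝ → ℝ}
    (hderiv : ∀ t, 0 ≤ t → HasDerivWithinAt (fun s => V (x s)) (D t) (Ici 0) t)
    (hdecr : ∀ t, 0 ≤ t → D t ≤ -σ (x t))
    {u : ι → ℝ} (hu : Tendsto u l atTop) {p : X} (hp : Tendsto (x ∘ u) l (𝓝 p)) :
    V p = 0 := by
  have hanti : AntitoneOn (fun s => V (x s)) (Ici 0) :=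
    antitoneOn_Ici_of_hasDerivWithinAt_nonpos hderiv fun t ht =>
      (hdecr t ht).trans (neg_nonpos.2 (hσnonneg _))
  have hle : ∀ t, 0 ≤ t → V p ≤ V (x t) := fun t ht =>
    hanti.le_of_tendsto_comp hu ((hV.tendsto p).comp hp) ht
  refine (hVnonneg p).antisymm' (not_lt.1 fun hpos => ?_)
  set K := A ∩ {y | V p ≤ V y}
  have hK : IsCompact K := hA.inter_right (isClosed_le continuous_const hV)
  obtain ⟨ε, hε, hεK⟩ := hK.exists_forall_le' hσ.continuousOn fun y hy =>
    hσpos y (hpos.trans_le hy.2)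
  have hbot : Tendsto (fun s => V (x s)) atTop atBot :=
    tendsto_atBot_of_hasDerivWithinAt_le_neg hε hderiv fun t ht =>
      (hdecr t ht).trans (neg_le_neg (hεK _ ⟨hxA t ht, hle t ht⟩))
  obtain ⟨t, ht⟩ := (hbot.eventually_lt_atBot 0).exists
  exact (hVnonneg _).not_gt ht

theorem prop2_trajectory_general {n N : ℕ}
    (A : Set (EuclideanSpace ℝ (Fin n))) (hA : IsCompact A)
    (J σ : Fin N → EuclideanSpace ℝ (Fin n) → ℝ)
    (hJcont : ∀ i, Continuous (J i)) (hσcont : ∀ i, Continuous (σ i))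
    (hJnonneg : ∀ i y, 0 ≤ J i y) (hσnonneg : ∀ i y, 0 ≤ σ i y)
    (hσpos : ∀ i y, 0 < J i y → 0 < σ i y)
    (i₀ : Fin N) (c : ℝ) (hc : 0 ≤ c)
    (S : Set (EuclideanSpace ℝ (Fin n)))
    (hS : S = {y ∈ A | J i₀ y ≤ c})
    (x : ℝ → EuclideanSpace ℝ (Fin n))
    (hxA : ∀ t, 0 ≤ t → x t ∈ A)
    (hx0 : x 0 ∈ S)
    (D : Fin N → ℝ → ℝ)
    (hderiv : ∀ i t, 0 ≤ t →
      HasDerivWithinAt (fun s => J i (x s)) (D i t) (Set.Ici 0) t)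
    (hdecr : ∀ i t, 0 ≤ t → D i t ≤ -σ i (x t)) :
    (∀ t, 0 ≤ t → x t ∈ S) ∧
    ∃ p ∈ S, ∃ tk : ℕ → ℝ,
      Filter.Tendsto tk Filter.atTop Filter.atTop ∧
      Filter.Tendsto (fun k => x (tk k)) Filter.atTop (nhds p) ∧
      ∀ i, J i p = 0 := by
  subst hS
  have hanti : AntitoneOn (fun s => J i₀ (x s)) (Ici 0) :=
    antitoneOn_Ici_of_hasDerivWithinAt_nonpos (hderiv i₀) fun t ht =>
      (hdecr i₀ t ht).trans (neg_nonpos.2 (hσnonneg i₀ _))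
  refine ⟨fun t ht => ⟨hxA t ht, (hanti self_mem_Ici ht ht).trans hx0.2⟩, ?_⟩
  obtain ⟨p, hpA, φ, hφ, hxφ⟩ := hA.tendsto_subseq fun k : ℕ => hxA k k.cast_nonneg
  have htk : Tendsto (fun k => (φ k : ℝ)) atTop atTop :=
    tendsto_natCast_atTop_atTop.comp hφ.tendsto_atTop
  have hJp : ∀ i, J i p = 0 := fun i =>
    eq_zero_of_tendsto_of_hasDerivWithinAt_le_neg hA (hJcont i) (hσcont i) (hJnonneg i)
      (hσnonneg i) (hσpos i) hxA (hderiv i) (hdecr i) htk hxφ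
  exact ⟨p, ⟨hpA, (hJp i₀).trans_le hc⟩, _, htk, hxφ, hJp⟩

/-- Trajectory-level content of Proposition 2: a trajectory staying in a compact set `A`,
starting in the sublevel set `S = {y ∈ A | J i₀ y ≤ c}`, and decreasing every
nonnegative value function `J i` at rate at least `σ i` (with `σ i > 0` wherever
`J i > 0`) never leaves `S` and approaches a common zero of all the `J i` inside `S`. -/
theorem prop2_trajectory {n N : ℕ}
    (A : Set (EuclideanSpace ℝ (Fin n))) (hA : IsCompact A)
    (J σ : Fin N → EuclideanSpace ℝ (Fin n) → ℝ)
    (hJcont : ∀ i, Continuous (J i)) (hσcont : ∀ i, Continuous (σ i))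
    (hJnonneg : ∀ i y, 0 ≤ J i y) (hσnonneg : ∀ i y, 0 ≤ σ i y)
    (hσpos : ∀ i y, 0 < J i y → 0 < σ i y)
    (i₀ : Fin N) (c : ℝ) (hc : 0 ≤ c)
    (S : Set (EuclideanSpace ℝ (Fin n)))
    (hS : S = {y ∈ A | J i₀ y ≤ c})
    (x : ℝ → EuclideanSpace ℝ (Fin n)) (hxcont : ContinuousOn x (Set.Ici 0))
    (hxA : ∀ t, 0 ≤ t → x t ∈ A)
    (hx0 : x 0 ∈ S)
    (D : Fin N → ℝ → ℝ)
    (hderiv : ∀ i t, 0 ≤ t →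
      HasDerivWithinAt (fun s => J i (x s)) (D i t) (Set.Ici 0) t)
    (hdecr : ∀ i t, 0 ≤ t → D i t ≤ -σ i (x t)) :
    (∀ t, 0 ≤ t → x t ∈ S) ∧
    ∃ p ∈ S, ∃ tk : ℕ → ℝ,
      Filter.Tendsto tk Filter.atTop Filter.atTop ∧
      Filter.Tendsto (fun k => x (tk k)) Filter.atTop (nhds p) ∧
      ∀ i, J i p = 0 :=
  prop2_trajectory_general A hA J σ hJcont hσcont hJnonneg hσnonneg hσpos i₀ c hc S hS x hxA hx0 D
    hderiv hdecr
end

section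
/- Let v_1,…,v_N be vectors in ℝⁿ, let r_1,…,r_N be nonnegative reals, and let d ∈ ℝⁿ be such that r_i + ⟨v_i, d⟩ = 0 for every i = 1,…,N. Then for all subsets P, Q ⊆ {1,…,N} with ∑_{i∈P} r_i > 0 and ∑_{i∈Q} r_i > 0, and every real k > 0, it is not the case that ∑_{i∈P} v_i = −k ∑_{i∈Q} v_i. -/
open scoped RealInnerProductSpace

/-- Core of the proof of Proposition 3 (equations (7)–(9)): if nonnegative values `r i`
and gradients `v i` satisfy the first-order relations `r i + ⟪v i, d⟫ = 0` for a common
displacement `d`, then no two subset sums of the `v i` with positive total value can be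
negatively proportional. -/
theorem prop3_taylor_core {n N : ℕ}
    (v : Fin N → EuclideanSpace ℝ (Fin n))
    (r : Fin N → ℝ) (hr : ∀ i, 0 ≤ r i)
    (d : EuclideanSpace ℝ (Fin n))
    (h : ∀ i, r i + ⟪v i, d⟫ = 0) :
    ∀ P Q : Finset (Fin N), 0 < ∑ i ∈ P, r i → 0 < ∑ i ∈ Q, r i →
      ∀ k : ℝ, 0 < k → ¬ (∑ i ∈ P, v i = -k • ∑ i ∈ Q, v i) := by
  intro P Q hP hQ k hk heq
  have key : ∀ S : Finset (Fin N), ⟪∑ i ∈ S, v i, d⟫ = -∑ i ∈ S, r i := by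
    intro S
    rw [sum_inner]
    rw [← Finset.sum_neg_distrib]
    exact Finset.sum_congr rfl fun i _ => by linarith [h i]
  have h1 := key P
  have h2 := key Q
  rw [heq, inner_smul_left] at h1
  simp only [RCLike.conj_to_real] at h1
  rw [h2] at h1
  nlinarith
end

section
/- Let L, q, β, J ∈ ℝ and a ∈ ℝᵐ with a ≠ 0 satisfy (1/4)‖a‖² − L = q − β J and q − β J ≥ 0, and set σ̄ = √(L² + (q − β J)‖a‖²). Then the constraint set { u ∈ ℝᵐ : L + ⟨a, u⟩ ≤ −σ̄ } is nonempty, the point u* = −(1/2) a satisfies the constraint with equality (L + ⟨a, u*⟩ = −σ̄), and u* is the unique minimizer of ‖u‖² over this constraint set. -/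
open scoped RealInnerProductSpace

/-- Main claim of Section IV.C: under the discounted HJB identity, the single-constraint
pointwise min-norm controller with right-hand side `−σ̄` is feasible, the optimal input
`u* = −(1/2) a` activates the constraint, and `u*` is the unique minimizer of `‖u‖²`
over the constraint set. -/
theorem min_norm_recovers_discounted_optimal_input {m : ℕ}
    (L q β J : ℝ) (a : EuclideanSpace ℝ (Fin m)) (ha : a ≠ 0)
    (hhjb : (1 / 4) * ‖a‖ ^ 2 - L = q - β * J)
    (hq : 0 ≤ q - β * J)
    (σ : ℝ) (hσ : σ = Real.sqrt (L ^ 2 + (q - β * J) * ‖a‖ ^ 2)) :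
    {u : EuclideanSpace ℝ (Fin m) | L + ⟪a, u⟫ ≤ -σ}.Nonempty ∧
    L + ⟪a, -(1 / 2 : ℝ) • a⟫ = -σ ∧
    (∀ u : EuclideanSpace ℝ (Fin m), L + ⟪a, u⟫ ≤ -σ →
      u ≠ -(1 / 2 : ℝ) • a → ‖(-(1 / 2 : ℝ) • a : EuclideanSpace ℝ (Fin m))‖ ^ 2 < ‖u‖ ^ 2) := by
  have hσval : σ = (1 / 2) * ‖a‖ ^ 2 - L := by
    rw [hσ, ← hhjb]
    have h1 : L ^ 2 + ((1 / 4) * ‖a‖ ^ 2 - L) * ‖a‖ ^ 2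
        = ((1 / 2) * ‖a‖ ^ 2 - L) ^ 2 := by ring
    rw [h1, Real.sqrt_sq]
    nlinarith [sq_nonneg (‖a‖), hhjb, hq]
  have hinner : ⟪a, -(1 / 2 : ℝ) • a⟫ = -(1 / 2) * ‖a‖ ^ 2 := by
    rw [real_inner_smul_right, real_inner_self_eq_norm_sq]
  have heq : L + ⟪a, -(1 / 2 : ℝ) • a⟫ = -σ := by
    rw [hinner, hσval]; ring
  refine ⟨⟨-(1 / 2 : ℝ) • a, le_of_eq heq⟩, heq, ?_⟩
  intro u hu hne
  have hnorm : ‖(-(1 / 2 : ℝ) • a : EuclideanSpace ℝ (Fin m))‖ ^ 2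
      = (1 / 4) * ‖a‖ ^ 2 := by
    rw [norm_smul, mul_pow]
    norm_num
  have hpos : 0 < ‖u - -(1 / 2 : ℝ) • a‖ ^ 2 := by
    have h := sub_ne_zero_of_ne hne
    exact pow_pos (norm_pos_iff.mpr h) 2
  have hexp : ‖u - -(1 / 2 : ℝ) • a‖ ^ 2
      = ‖u‖ ^ 2 + ⟪a, u⟫ + (1 / 4) * ‖a‖ ^ 2 := by
    rw [norm_sub_sq_real, real_inner_smul_right, real_inner_comm u a, hnorm]
    ring
  have hcon : ⟪a, u⟫ ≤ -(1 / 2) * ‖a‖ ^ 2 := by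
    rw [hσval] at hu; linarith
  rw [hnorm]
  nlinarith [hpos, hexp, hcon]
end
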